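/- Let M be a connected matroid of rank r on [n] with n ≥ 2, and let F be a flat of M with ∅ ≠ F ≠ [n]. Then the face P_{M_F} of the matroid polytope P_M on which the linear functional Σ_{i∈F} x_i attains its maximum rk(F) — equivalently, the convex hull of the indicator vectors e_σ of the bases σ of M with |σ ∩ F| = rk(F) — has affine-hull dimension n − 2 if and only if both the restriction M|F and the contraction M/F are connected matroids. -/

import Mathlib

open Finset Pointwise

/-- The 0/1 indicator vector (in `ℝ^n`) of a finite set of coordinates. -/
def indVec {n : ℕ} (S : Finset (Fin n)) : Fin n → ℝ := fun i => if i ∈ S then 1 else 0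

/-- Independence with respect to a family `𝔅` of bases: being contained in a basis. -/
def FamIndep {n : ℕ} (𝔅 : Finset (Finset (Fin n))) (I : Finset (Fin n)) : Prop :=
  ∃ B ∈ 𝔅, I ⊆ B

/-- Circuits of the family `𝔅`: minimal dependent sets. -/
def FamCircuit {n : ℕ} (𝔅 : Finset (Finset (Fin n))) (C : Finset (Fin n)) : Prop :=
  ¬ FamIndep 𝔅 C ∧ ∀ D ⊂ C, FamIndep 𝔅 D

open scoped Classical in
/-- The rank of a set: maximal cardinality of an independent subset. -/
noncomputable def famRk {n : ℕ} (𝔅 : Finset (Finset (Fin n))) (F : Finset (Fin n)) : ℕ :=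
  (F.powerset.filter (fun I => FamIndep 𝔅 I)).sup Finset.card

open scoped Classical in
/-- The bases of the restriction to `F`: the maximal independent subsets of `F`. -/
noncomputable def famRestrictBases {n : ℕ} (𝔅 : Finset (Finset (Fin n)))
    (F : Finset (Fin n)) : Finset (Finset (Fin n)) :=
  F.powerset.filter fun B =>
    FamIndep 𝔅 B ∧ ∀ B' ⊆ F, FamIndep 𝔅 B' → B ⊆ B' → B = B'

open scoped Classical in
/-- The bases of the contraction by `F`: the sets `B \ F` where `B` is a basis meeting `F`
in a set of full rank `rk F`. -/
noncomputable def famContractBases {n : ℕ} (𝔅 : Finset (Finset (Fin n)))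
    (F : Finset (Fin n)) : Finset (Finset (Fin n)) :=
  (𝔅.filter fun B => (B ∩ F).card = famRk 𝔅 F).image (· \ F)

/-- `i` and `j` are related if equal or contained in a common circuit. -/
def FamConnRel {n : ℕ} (𝔅 : Finset (Finset (Fin n))) (i j : Fin n) : Prop :=
  i = j ∨ ∃ C, FamCircuit 𝔅 C ∧ i ∈ C ∧ j ∈ C

/-- Number of connected components: number of classes of the equivalence relation
generated by `FamConnRel`. -/
noncomputable def famNumComponents {n : ℕ} (𝔅 : Finset (Finset (Fin n))) : ℕ :=
  Nat.card (Quot (FamConnRel 𝔅))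

/-- Connectedness of the matroid presented by bases `𝔅` on the ground set `E`:
any two distinct elements of `E` lie in a common circuit (within `E`). -/
def FamConnectedOn {n : ℕ} (𝔅 : Finset (Finset (Fin n))) (E : Finset (Fin n)) : Prop :=
  ∀ i ∈ E, ∀ j ∈ E, i ≠ j → ∃ C, C ⊆ E ∧ FamCircuit 𝔅 C ∧ i ∈ C ∧ j ∈ C

/-- A matroid of rank `r` on the ground set `Fin n`, given by its collection of bases:
`r`-element sets satisfying the basis exchange axiom. -/
structure FinMatroid (n r : ℕ) where
  bases : Finset (Finset (Fin n))
  bases_nonempty : bases.Nonempty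
  card_bases : ∀ B ∈ bases, B.card = r
  exchange : ∀ B₁ ∈ bases, ∀ B₂ ∈ bases, ∀ i ∈ B₁ \ B₂,
      ∃ j ∈ B₂ \ B₁, insert j (B₁.erase i) ∈ bases

namespace FinMatroid

variable {n r : ℕ}

def Indep (M : FinMatroid n r) (I : Finset (Fin n)) : Prop := FamIndep M.bases I

def IsCircuit (M : FinMatroid n r) (C : Finset (Fin n)) : Prop := FamCircuit M.bases C

noncomputable def rk (M : FinMatroid n r) (F : Finset (Fin n)) : ℕ := famRk M.bases F

/-- A flat: no circuit leaves exactly one element outside `F`. -/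
def IsFlat (M : FinMatroid n r) (F : Finset (Fin n)) : Prop :=
  ∀ C, M.IsCircuit C → (C \ F).card ≠ 1

open scoped Classical in
/-- Closure of a set: the intersection of all flats containing it (the smallest flat
containing it). -/
noncomputable def closure (M : FinMatroid n r) (S : Finset (Fin n)) : Finset (Fin n) :=
  Finset.univ.filter fun i => ∀ F, M.IsFlat F → S ⊆ F → i ∈ F

/-- No single element is dependent. -/
def Loopless (M : FinMatroid n r) : Prop := ∀ i : Fin n, M.Indep {i}

noncomputable def numComponents (M : FinMatroid n r) : ℕ := famNumComponents M.bases

/-- Any two distinct elements lie in a common circuit. -/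
def Connected (M : FinMatroid n r) : Prop :=
  ∀ i j : Fin n, i ≠ j → ∃ C, M.IsCircuit C ∧ i ∈ C ∧ j ∈ C

/-- `B` is a `w`-maximal basis of `M`. -/
def IsMaxBasis (M : FinMatroid n r) (w : Fin n → ℝ) (B : Finset (Fin n)) : Prop :=
  B ∈ M.bases ∧ ∀ B' ∈ M.bases, ∑ i ∈ B', w i ≤ ∑ i ∈ B, w i

open scoped Classical in
/-- The bases of the matroid `M_w`: the `w`-maximal bases of `M`. -/
noncomputable def maxBases (M : FinMatroid n r) (w : Fin n → ℝ) :
    Finset (Finset (Fin n)) :=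
  M.bases.filter fun B => ∀ B' ∈ M.bases, ∑ i ∈ B', w i ≤ ∑ i ∈ B, w i

/-- Membership in the Bergman fan: on every circuit the minimum of `w` is attained
at least twice. -/
def InBergmanFan (M : FinMatroid n r) (w : Fin n → ℝ) : Prop :=
  ∀ C, M.IsCircuit C → ∃ i ∈ C, ∃ j ∈ C, i ≠ j ∧ w i = w j ∧ ∀ k ∈ C, w i ≤ w k

/-- The matroid polytope: convex hull of the indicator vectors of the bases. -/
noncomputable def polytope (M : FinMatroid n r) : Set (Fin n → ℝ) :=
  convexHull ℝ (indVec '' ↑M.bases)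

noncomputable def restrictBases (M : FinMatroid n r) (F : Finset (Fin n)) :
    Finset (Finset (Fin n)) :=
  famRestrictBases M.bases F

noncomputable def contractBases (M : FinMatroid n r) (F : Finset (Fin n)) :
    Finset (Finset (Fin n)) :=
  famContractBases M.bases F

/-- `𝓖` is a building set in the lattice of flats of `M` (with bottom element `∅` and
join = closure of union): for every nonempty flat `X`, the join map is an order
isomorphism from the product of the lower intervals of the maximal elements of
`𝓖` below `X` onto the lower interval of `X`. -/
def IsFlatBuilding (M : FinMatroid n r) (𝓖 : Set (Finset (Fin n))) : Prop :=
  (∀ F ∈ 𝓖, M.IsFlat F ∧ F ≠ ∅) ∧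
  ∀ X, M.IsFlat X → X ≠ ∅ →
    ∃ (k : ℕ) (g : Fin k → Finset (Fin n)),
      Function.Injective g ∧
      (∀ i, g i ∈ 𝓖 ∧ g i ⊆ X) ∧
      (∀ i, ∀ H ∈ 𝓖, H ⊆ X → g i ⊆ H → g i = H) ∧
      (∀ H ∈ 𝓖, H ⊆ X → ∃ i, H ⊆ g i) ∧
      ∃ e : (∀ i : Fin k, {F : Finset (Fin n) // M.IsFlat F ∧ F ⊆ g i}) ≃o
              {F : Finset (Fin n) // M.IsFlat F ∧ F ⊆ X},
        ∀ y, (e y).1 = M.closure (Finset.univ.sup fun i => (y i).1)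

/-- `S` is nested with respect to `𝓖` (in the lattice of flats of `M`): `S ⊆ 𝓖` and for
every subcollection of at least two pairwise incomparable members, their join (the
closure of their union) is not in `𝓖`. -/
def IsNested (M : FinMatroid n r) (𝓖 : Set (Finset (Fin n)))
    (S : Finset (Finset (Fin n))) : Prop :=
  ↑S ⊆ 𝓖 ∧ ∀ T ⊆ S, 2 ≤ T.card →
    (∀ A ∈ T, ∀ B ∈ T, A ≠ B → ¬ A ⊆ B ∧ ¬ B ⊆ A) →
    M.closure (T.sup id) ∉ 𝓖

end FinMatroid

/-- A building set in the Boolean lattice of subsets of `Fin r`: for every nonempty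
`X ⊆ [r]`, the union map is an order isomorphism from the product of the lower
intervals of the maximal elements of `𝓕` below `X` onto the lower interval of `X`. -/
def BoolBuilding {r : ℕ} (𝓕 : Set (Finset (Fin r))) : Prop :=
  (∀ F ∈ 𝓕, F ≠ ∅) ∧
  ∀ X : Finset (Fin r), X ≠ ∅ →
    ∃ (k : ℕ) (g : Fin k → Finset (Fin r)),
      Function.Injective g ∧
      (∀ i, g i ∈ 𝓕 ∧ g i ⊆ X) ∧
      (∀ i, ∀ H ∈ 𝓕, H ⊆ X → g i ⊆ H → g i = H) ∧
      (∀ H ∈ 𝓕, H ⊆ X → ∃ i, H ⊆ g i) ∧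
      ∃ e : (∀ i : Fin k, {F : Finset (Fin r) // F ⊆ g i}) ≃o
              {F : Finset (Fin r) // F ⊆ X},
        ∀ y, (e y).1 = Finset.univ.sup fun i => (y i).1

/-- `S` is nested with respect to `𝓕` in the Boolean lattice: for every subcollection
of at least two pairwise incomparable members, their union is not in `𝓕`. -/
def BoolNested {r : ℕ} (𝓕 : Set (Finset (Fin r))) (S : Finset (Finset (Fin r))) : Prop :=
  ↑S ⊆ 𝓕 ∧ ∀ T ⊆ S, 2 ≤ T.card →
    (∀ A ∈ T, ∀ B ∈ T, A ≠ B → ¬ A ⊆ B ∧ ¬ B ⊆ A) →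
    T.sup id ∉ 𝓕

/-- The simplex `Δ_F = conv{e_i : i ∈ F}`. -/
noncomputable def faceSimplex {r : ℕ} (F : Finset (Fin r)) : Set (Fin r → ℝ) :=
  convexHull ℝ ((fun i => (Pi.single i 1 : Fin r → ℝ)) '' ↑F)

/-- The Minkowski sum `Δ_𝓕 = Σ_{F ∈ 𝓕} Δ_F`. -/
noncomputable def minkSum {r : ℕ} (𝓕 : Finset (Finset (Fin r))) : Set (Fin r → ℝ) :=
  ∑ F ∈ 𝓕, faceSimplex F
section FamLemmas

open Finset

variable {n : ℕ}

lemma famIndep_mono {𝔅 : Finset (Finset (Fin n))} {I J : Finset (Fin n)}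
    (h : FamIndep 𝔅 J) (hIJ : I ⊆ J) : FamIndep 𝔅 I := by
  obtain ⟨B, hB, hJB⟩ := h; exact ⟨B, hB, hIJ.trans hJB⟩

lemma famIndep_empty {𝔅 : Finset (Finset (Fin n))} (h : 𝔅.Nonempty) :
    FamIndep 𝔅 (∅ : Finset (Fin n)) := by
  obtain ⟨B, hB⟩ := h; exact ⟨B, hB, Finset.empty_subset _⟩

/-- The augmentation property for a family of bases. -/
def FamAug (𝔅 : Finset (Finset (Fin n))) : Prop :=
  ∀ I J : Finset (Fin n), FamIndep 𝔅 I → FamIndep 𝔅 J → I.card < J.card →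
    ∃ x ∈ J, x ∉ I ∧ FamIndep 𝔅 (insert x I)

/-- Every dependent set contains a circuit. -/
lemma exists_famCircuit_of_dep {𝔅 : Finset (Finset (Fin n))} :
    ∀ C : Finset (Fin n), ¬ FamIndep 𝔅 C → ∃ C', C' ⊆ C ∧ FamCircuit 𝔅 C' := by
  intro C
  induction C using Finset.strongInduction with
  | _ C ih =>
    intro hC
    by_cases h : ∀ D ⊂ C, FamIndep 𝔅 D
    · exact ⟨C, subset_rfl, hC, h⟩
    · push_neg at h
      obtain ⟨D, hD, hDdep⟩ := h
      obtain ⟨C', hC'D, hC'⟩ := ih D hD hDdep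
      exact ⟨C', hC'D.trans hD.subset, hC'⟩

/-- Extend an independent set inside `S` to a maximal one. -/
lemma exists_max_indep_between {𝔅 : Finset (Finset (Fin n))} {I S : Finset (Fin n)}
    (hI : FamIndep 𝔅 I) (hIS : I ⊆ S) :
    ∃ A, I ⊆ A ∧ A ⊆ S ∧ FamIndep 𝔅 A ∧
      ∀ x ∈ S, x ∉ A → ¬ FamIndep 𝔅 (insert x A) := by
  classical
  set T := S.powerset.filter (fun A => I ⊆ A ∧ FamIndep 𝔅 A) with hT
  have hne : T.Nonempty := ⟨I, by simp [hT, hIS, hI]⟩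
  obtain ⟨A, hA, hmax⟩ := T.exists_max_image Finset.card hne
  simp only [hT, mem_filter, mem_powerset] at hA
  refine ⟨A, hA.2.1, hA.1, hA.2.2, ?_⟩
  intro x hxS hxA hind
  have : insert x A ∈ T := by
    simp only [hT, mem_filter, mem_powerset]
    exact ⟨insert_subset hxS hA.1, hA.2.1.trans (subset_insert _ _), hind⟩
  have := hmax _ this
  rw [card_insert_of_notMem hxA] at this
  omega

/-- Equal-cardinality bases plus the exchange axiom imply augmentation. -/
lemma famAug_of_exchange {𝔅 : Finset (Finset (Fin n))} {r : ℕ}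
    (hcard : ∀ B ∈ 𝔅, B.card = r)
    (hex : ∀ B₁ ∈ 𝔅, ∀ B₂ ∈ 𝔅, ∀ i ∈ B₁ \ B₂,
      ∃ j ∈ B₂ \ B₁, insert j (B₁.erase i) ∈ 𝔅) :
    FamAug 𝔅 := by
  classical
  intro I J hI hJ hIJ
  by_contra hcon
  push_neg at hcon
  obtain ⟨B₂, hB₂, hJB₂⟩ := hJ
  -- no x in J \ I augments I
  have key : ∀ k : ℕ, ∀ B₁ ∈ 𝔅, I ⊆ B₁ → (B₁ \ (I ∪ B₂)).card ≤ k → False := by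
    intro k
    induction k with
    | zero =>
      intro B₁ hB₁ hIB₁ hk
      have hsub : B₁ ⊆ I ∪ B₂ := by
        intro x hx
        by_contra hx'
        have : x ∈ B₁ \ (I ∪ B₂) := mem_sdiff.mpr ⟨hx, hx'⟩
        have := card_pos.mpr ⟨x, this⟩
        omega
      -- J ∩ B₁ ⊆ I
      have hJI : ∀ x ∈ J, x ∈ B₁ → x ∈ I := by
        intro x hxJ hxB₁
        by_contra hxI
        exact (hcon x hxJ hxI) ⟨B₁, hB₁, insert_subset hxB₁ hIB₁⟩
      have hsub2 : B₁ \ I ⊆ B₂ \ J := by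
        intro w hw
        rw [mem_sdiff] at hw ⊢
        have hwB₂ : w ∈ B₂ := by
          rcases mem_union.mp (hsub hw.1) with h | h
          · exact absurd h hw.2
          · exact h
        exact ⟨hwB₂, fun hwJ => hw.2 (hJI w hwJ hw.1)⟩
      have h1 : (B₁ \ I).card ≤ (B₂ \ J).card := card_le_card hsub2
      have h2 : (B₁ \ I).card = r - I.card := by
        have := card_sdiff_of_subset hIB₁
        rw [hcard B₁ hB₁] at this; omega
      have h3 : (B₂ \ J).card = r - J.card := by
        have := card_sdiff_of_subset hJB₂
        rw [hcard B₂ hB₂] at this; omega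
      have hIr : I.card ≤ r := by
        have := card_le_card hIB₁; rw [hcard B₁ hB₁] at this; exact this
      have hJr : J.card ≤ r := by
        have := card_le_card hJB₂; rw [hcard B₂ hB₂] at this; exact this
      omega
    | succ k ih =>
      intro B₁ hB₁ hIB₁ hk
      by_cases h0 : (B₁ \ (I ∪ B₂)).card ≤ k
      · exact ih B₁ hB₁ hIB₁ h0
      · have hpos : 0 < (B₁ \ (I ∪ B₂)).card := by omega
        obtain ⟨y, hy⟩ := card_pos.mp hpos
        rw [mem_sdiff, mem_union] at hy
        push_neg at hy
        obtain ⟨hyB₁, hyI, hyB₂⟩ := hy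
        obtain ⟨z, hz, hB₁'⟩ := hex B₁ hB₁ B₂ hB₂ y (mem_sdiff.mpr ⟨hyB₁, hyB₂⟩)
        rw [mem_sdiff] at hz
        have hIB₁' : I ⊆ insert z (B₁.erase y) := by
          intro x hx
          exact mem_insert_of_mem (mem_erase.mpr ⟨fun h => hyI (h ▸ hx), hIB₁ hx⟩)
        apply ih _ hB₁' hIB₁'
        have hsub : insert z (B₁.erase y) \ (I ∪ B₂) ⊆ (B₁ \ (I ∪ B₂)).erase y := by
          intro x hx
          rw [mem_sdiff, mem_insert] at hx
          rcases hx.1 with rfl | hx1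
          · exact absurd (mem_union_right _ hz.1) hx.2
          · exact mem_erase.mpr ⟨(mem_erase.mp hx1).1, mem_sdiff.mpr ⟨(mem_erase.mp hx1).2, hx.2⟩⟩
        have := card_le_card hsub
        have hy' : y ∈ B₁ \ (I ∪ B₂) := by
          rw [mem_sdiff, mem_union]; push_neg; exact ⟨hyB₁, hyI, hyB₂⟩
        have := card_erase_of_mem hy'
        omega
  obtain ⟨B₁, hB₁, hIB₁⟩ := hI
  exact key _ B₁ hB₁ hIB₁ le_rfl

end FamLemmas

section MaxAug
open Finset
variable {n : ℕ} {𝔅 : Finset (Finset (Fin n))}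

/-- Maximal augmentation: extend `X` inside `X ∪ Y` to size at least `|Y|`. -/
lemma famAug_maxaug (haug : FamAug 𝔅) {X Y : Finset (Fin n)}
    (hX : FamIndep 𝔅 X) (hY : FamIndep 𝔅 Y) :
    ∃ Z, FamIndep 𝔅 Z ∧ X ⊆ Z ∧ Z ⊆ X ∪ Y ∧ Y.card ≤ Z.card := by
  classical
  have key : ∀ k : ℕ, ∀ Z, FamIndep 𝔅 Z → X ⊆ Z → Z ⊆ X ∪ Y → Y.card - Z.card ≤ k →
      ∃ Z', FamIndep 𝔅 Z' ∧ X ⊆ Z' ∧ Z' ⊆ X ∪ Y ∧ Y.card ≤ Z'.card := by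
    intro k
    induction k with
    | zero => intro Z h1 h2 h3 h4; exact ⟨Z, h1, h2, h3, by omega⟩
    | succ k ih =>
      intro Z h1 h2 h3 h4
      by_cases hc : Y.card ≤ Z.card
      · exact ⟨Z, h1, h2, h3, hc⟩
      · obtain ⟨x, hxY, hxZ, hxind⟩ := haug Z Y h1 hY (by omega)
        refine ih (insert x Z) hxind (h2.trans (Finset.subset_insert _ _))
          (Finset.insert_subset (Finset.mem_union_right _ hxY) h3) ?_
        rw [Finset.card_insert_of_notMem hxZ]
        omega
  exact key (Y.card) X hX subset_rfl Finset.subset_union_left (by omega)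

end MaxAug
section CircLemmas

open Finset

variable {n : ℕ} {𝔅 : Finset (Finset (Fin n))}

lemma famCircuit_dep {C : Finset (Fin n)} (h : FamCircuit 𝔅 C) : ¬ FamIndep 𝔅 C := h.1

lemma famCircuit_ssubset_indep {C D : Finset (Fin n)} (h : FamCircuit 𝔅 C) (hD : D ⊂ C) :
    FamIndep 𝔅 D := h.2 D hD

/-- Weak circuit elimination. -/
lemma famCircuit_weak_elim (haug : FamAug 𝔅) {C₁ C₂ : Finset (Fin n)} {e : Fin n}
    (h₁ : FamCircuit 𝔅 C₁) (h₂ : FamCircuit 𝔅 C₂) (hne : C₁ ≠ C₂)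
    (he₁ : e ∈ C₁) (he₂ : e ∈ C₂) :
    ¬ FamIndep 𝔅 ((C₁ ∪ C₂).erase e) := by
  classical
  intro hX
  -- pick f ∈ C₂ \ C₁
  have hf : ∃ f, f ∈ C₂ ∧ f ∉ C₁ := by
    by_contra h
    push_neg at h
    have hsub : C₂ ⊆ C₁ := h
    rcases eq_or_ssubset_of_subset hsub with h' | h'
    · exact hne h'.symm
    · exact h₂.1 (famCircuit_ssubset_indep h₁ h')
  obtain ⟨f, hfC₂, hfC₁⟩ := hf
  have hCf : FamIndep 𝔅 (C₂.erase f) :=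
    famCircuit_ssubset_indep h₂ (erase_ssubset hfC₂)
  have hsubS : C₂.erase f ⊆ C₁ ∪ C₂ := (erase_subset _ _).trans subset_union_right
  obtain ⟨A, hCA, hAS, hAind, hAmax⟩ := exists_max_indep_between hCf hsubS
  have hfA : f ∉ A := by
    intro hfA
    apply h₂.1
    apply famIndep_mono hAind
    intro x hx
    by_cases hxf : x = f
    · exact hxf ▸ hfA
    · exact hCA (mem_erase.mpr ⟨hxf, hx⟩)
  -- |A| ≥ |X|
  have hXcard : ((C₁ ∪ C₂).erase e).card = (C₁ ∪ C₂).card - 1 :=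
    card_erase_of_mem (mem_union_left _ he₁)
  have hAcard : ((C₁ ∪ C₂).erase e).card ≤ A.card := by
    by_contra h
    push_neg at h
    obtain ⟨x, hxX, hxA, hxind⟩ := haug A _ hAind hX h
    exact hAmax x ((erase_subset _ _) hxX) hxA hxind
  have hAsub : A ⊆ (C₁ ∪ C₂).erase f := by
    intro x hx
    exact mem_erase.mpr ⟨fun h => hfA (h ▸ hx), hAS hx⟩
  have hef : e ≠ f := fun h => hfC₁ (h ▸ he₁)
  have hfCU : f ∈ C₁ ∪ C₂ := mem_union_right _ hfC₂
  have : A = (C₁ ∪ C₂).erase f := by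
    apply eq_of_subset_of_card_le hAsub
    rw [card_erase_of_mem hfCU]
    omega
  apply h₁.1
  apply famIndep_mono hAind
  rw [this]
  intro x hx
  exact mem_erase.mpr ⟨fun h => hfC₁ (h ▸ hx), mem_union_left _ hx⟩

lemma exists_mem_circuit_diff {C₁ C₂ : Finset (Fin n)} (h₁ : FamCircuit 𝔅 C₁)
    (h₂ : FamCircuit 𝔅 C₂) (hsub : C₂ ⊆ C₁ ∪ C₂) (hne : ∃ x ∈ C₁, x ∉ C₂) :
    True := trivial

/-- Strong circuit elimination. -/
lemma famCircuit_strong_elim (haug : FamAug 𝔅) :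
    ∀ m : ℕ, ∀ C₁ C₂ : Finset (Fin n), ∀ e f : Fin n,
      (C₁ ∪ C₂).card ≤ m → FamCircuit 𝔅 C₁ → FamCircuit 𝔅 C₂ →
      e ∈ C₁ → e ∈ C₂ → f ∈ C₁ → f ∉ C₂ →
      ∃ C₃, FamCircuit 𝔅 C₃ ∧ f ∈ C₃ ∧ C₃ ⊆ (C₁ ∪ C₂).erase e := by
  classical
  intro m
  induction m with
  | zero =>
    intro C₁ C₂ e f hm _ _ he₁ _ _ _
    have : e ∈ C₁ ∪ C₂ := mem_union_left _ he₁
    have := card_pos.mpr ⟨e, this⟩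
    omega
  | succ m ih =>
    intro C₁ C₂ e f hm h₁ h₂ he₁ he₂ hf₁ hf₂
    have hne : C₁ ≠ C₂ := fun h => hf₂ (h ▸ hf₁)
    have hdep := famCircuit_weak_elim haug h₁ h₂ hne he₁ he₂
    obtain ⟨C₃, hC₃sub, hC₃⟩ := exists_famCircuit_of_dep _ hdep
    by_cases hfC₃ : f ∈ C₃
    · exact ⟨C₃, hC₃, hfC₃, hC₃sub⟩
    -- f ∉ C₃, e ∉ C₃
    have heC₃ : e ∉ C₃ := fun h => (mem_erase.mp (hC₃sub h)).1 rfl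
    have hC₃U : C₃ ⊆ C₁ ∪ C₂ := hC₃sub.trans (erase_subset _ _)
    -- pick h ∈ C₃ ∩ (C₂ \ C₁)
    have hh : ∃ h, h ∈ C₃ ∧ h ∈ C₂ ∧ h ∉ C₁ := by
      by_contra hcon
      push_neg at hcon
      have hsub : C₃ ⊆ C₁ := by
        intro x hx
        rcases mem_union.mp (hC₃U hx) with h | h
        · exact h
        · by_contra h'
          exact h' (hcon x hx h)
      have : C₃ ⊂ C₁ := ssubset_iff_of_subset hsub |>.mpr ⟨e, he₁, heC₃⟩
      exact hC₃.1 (famCircuit_ssubset_indep h₁ this)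
    obtain ⟨h, hhC₃, hhC₂, hhC₁⟩ := hh
    -- first IH application: circuits C₂, C₃, common h, e ∈ C₂ \ C₃
    have hcard₁ : (C₂ ∪ C₃).card ≤ m := by
      have hsub : C₂ ∪ C₃ ⊆ (C₁ ∪ C₂).erase f := by
        intro x hx
        rcases mem_union.mp hx with hx | hx
        · exact mem_erase.mpr ⟨fun hxf => hf₂ (hxf ▸ hx), mem_union_right _ hx⟩
        · exact mem_erase.mpr ⟨fun hxf => hfC₃ (hxf ▸ hx), hC₃U hx⟩
      have := card_le_card hsub
      have := card_erase_of_mem (mem_union_left C₂ hf₁)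
      omega
    obtain ⟨C₄, hC₄, heC₄, hC₄sub⟩ := ih C₂ C₃ h e hcard₁ h₂ hC₃ hhC₂ hhC₃ he₂ heC₃
    -- second IH application: circuits C₁, C₄, common e, f ∈ C₁ \ C₄
    have hC₄U : C₄ ⊆ C₁ ∪ C₂ := by
      intro x hx
      have := (mem_erase.mp (hC₄sub hx)).2
      rcases mem_union.mp this with h' | h'
      · exact mem_union_right _ h'
      · exact hC₃U h'
    have hfC₄ : f ∉ C₄ := by
      intro hx
      have := (mem_erase.mp (hC₄sub hx)).2
      rcases mem_union.mp this with h' | h'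
      · exact hf₂ h'
      · exact hfC₃ h'
    have hhC₄ : h ∉ C₄ := fun hx => (mem_erase.mp (hC₄sub hx)).1 rfl
    have hcard₂ : (C₁ ∪ C₄).card ≤ m := by
      have hsub : C₁ ∪ C₄ ⊆ (C₁ ∪ C₂).erase h := by
        intro x hx
        rcases mem_union.mp hx with hx | hx
        · exact mem_erase.mpr ⟨fun hxh => hhC₁ (hxh ▸ hx), mem_union_left _ hx⟩
        · exact mem_erase.mpr ⟨fun hxh => hhC₄ (hxh ▸ hx), hC₄U hx⟩
      have := card_le_card hsub
      have := card_erase_of_mem (mem_union_right C₁ hhC₂)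
      omega
    obtain ⟨C₅, hC₅, hfC₅, hC₅sub⟩ := ih C₁ C₄ e f hcard₂ h₁ hC₄ he₁ heC₄ hf₁ hfC₄
    refine ⟨C₅, hC₅, hfC₅, ?_⟩
    intro x hx
    have := mem_erase.mp (hC₅sub hx)
    rcases mem_union.mp this.2 with h' | h'
    · exact mem_erase.mpr ⟨this.1, mem_union_left _ h'⟩
    · exact mem_erase.mpr ⟨this.1, hC₄U h'⟩

/-- Transitivity of the circuit-connectivity relation. -/
lemma famCircuit_trans_aux (haug : FamAug 𝔅) :
    ∀ m : ℕ, ∀ C₁ C₂ : Finset (Fin n), ∀ a g : Fin n,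
      (C₁ ∪ C₂).card ≤ m → FamCircuit 𝔅 C₁ → FamCircuit 𝔅 C₂ →
      a ∈ C₁ → g ∈ C₂ → (C₁ ∩ C₂).Nonempty →
      ∃ C, FamCircuit 𝔅 C ∧ a ∈ C ∧ g ∈ C := by
  classical
  intro m
  induction m with
  | zero =>
    intro C₁ C₂ a g hm h₁ _ ha _ _
    have := card_pos.mpr ⟨a, mem_union_left C₂ ha⟩
    omega
  | succ m ih =>
    intro C₁ C₂ a g hm h₁ h₂ ha hg hint
    by_cases hgC₁ : g ∈ C₁
    · exact ⟨C₁, h₁, ha, hgC₁⟩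
    by_cases haC₂ : a ∈ C₂
    · exact ⟨C₂, h₂, haC₂, hg⟩
    obtain ⟨h, hh⟩ := hint
    rw [mem_inter] at hh
    have haC₂' : a ∉ C₂ := haC₂
    -- strong elim: C₃ ∋ a, C₃ ⊆ (C₁ ∪ C₂) \ {h}
    obtain ⟨C₃, hC₃, haC₃, hC₃sub⟩ :=
      famCircuit_strong_elim haug ((C₁ ∪ C₂).card) C₁ C₂ h a le_rfl h₁ h₂ hh.1 hh.2 ha haC₂'
    by_cases hgC₃ : g ∈ C₃
    · exact ⟨C₃, hC₃, haC₃, hgC₃⟩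
    have hhC₃ : h ∉ C₃ := fun hx => (mem_erase.mp (hC₃sub hx)).1 rfl
    have hC₃U : C₃ ⊆ C₁ ∪ C₂ := hC₃sub.trans (erase_subset _ _)
    -- C₃ meets C₂ \ C₁
    have hh' : ∃ h', h' ∈ C₃ ∧ h' ∈ C₂ ∧ h' ∉ C₁ := by
      by_contra hcon
      push_neg at hcon
      have hsub : C₃ ⊆ C₁ := by
        intro x hx
        rcases mem_union.mp (hC₃U hx) with h' | h'
        · exact h'
        · by_contra hxx
          exact hxx (hcon x hx h')
      have : C₃ ⊂ C₁ := ssubset_iff_of_subset hsub |>.mpr ⟨h, hh.1, hhC₃⟩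
      exact hC₃.1 (famCircuit_ssubset_indep h₁ this)
    obtain ⟨h', hh'C₃, hh'C₂, hh'C₁⟩ := hh'
    -- pair (C₃, C₂)
    have hsub32 : C₃ ∪ C₂ ⊆ C₁ ∪ C₂ := union_subset hC₃U subset_union_right
    by_cases hlt : (C₃ ∪ C₂).card ≤ m
    · exact ih C₃ C₂ a g hlt hC₃ h₂ haC₃ hg ⟨h', mem_inter.mpr ⟨hh'C₃, hh'C₂⟩⟩
    · -- C₃ ∪ C₂ = C₁ ∪ C₂
      have heq : C₃ ∪ C₂ = C₁ ∪ C₂ := by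
        apply eq_of_subset_of_card_le hsub32
        have := card_le_card hsub32
        omega
      -- strong elim on (C₂, C₃) at h', removing h', keeping g
      obtain ⟨C₄, hC₄, hgC₄, hC₄sub⟩ :=
        famCircuit_strong_elim haug ((C₂ ∪ C₃).card) C₂ C₃ h' g le_rfl h₂ hC₃ hh'C₂ hh'C₃ hg hgC₃
      by_cases haC₄ : a ∈ C₄
      · exact ⟨C₄, hC₄, haC₄, hgC₄⟩
      have hh'C₄ : h' ∉ C₄ := fun hx => (mem_erase.mp (hC₄sub hx)).1 rfl
      have hC₄U : C₄ ⊆ C₁ ∪ C₂ := by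
        intro x hx
        have := (mem_erase.mp (hC₄sub hx)).2
        rcases mem_union.mp this with h'' | h''
        · exact mem_union_right _ h''
        · exact hC₃U h''
      -- C₄ meets C₁
      have hint14 : (C₁ ∩ C₄).Nonempty := by
        by_contra hcon
        rw [not_nonempty_iff_eq_empty] at hcon
        have hsub : C₄ ⊆ C₂ := by
          intro x hx
          rcases mem_union.mp (hC₄U hx) with h'' | h''
          · exact absurd (mem_inter.mpr ⟨h'', hx⟩) (by rw [hcon]; exact notMem_empty x)
          · exact h''
        have : C₄ ⊂ C₂ := ssubset_iff_of_subset hsub |>.mpr ⟨h', hh'C₂, hh'C₄⟩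
        exact hC₄.1 (famCircuit_ssubset_indep h₂ this)
      have hsub14 : C₁ ∪ C₄ ⊆ C₁ ∪ C₂ := union_subset subset_union_left hC₄U
      by_cases hlt2 : (C₁ ∪ C₄).card ≤ m
      · exact ih C₁ C₄ a g hlt2 h₁ hC₄ ha hgC₄ hint14
      · have heq2 : C₁ ∪ C₄ = C₁ ∪ C₂ := by
          apply eq_of_subset_of_card_le hsub14
          have := card_le_card hsub14
          omega
        -- h' ∈ C₂ \ C₁ ⊆ C₁ ∪ C₄, so h' ∈ C₄: contradiction
        have : h' ∈ C₁ ∪ C₄ := heq2.symm ▸ mem_union_right _ hh'C₂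
        rcases mem_union.mp this with h'' | h''
        · exact absurd h'' hh'C₁
        · exact absurd h'' hh'C₄

lemma famCircuit_trans (haug : FamAug 𝔅) {C₁ C₂ : Finset (Fin n)} {a g : Fin n}
    (h₁ : FamCircuit 𝔅 C₁) (h₂ : FamCircuit 𝔅 C₂) (ha : a ∈ C₁) (hg : g ∈ C₂)
    (hint : (C₁ ∩ C₂).Nonempty) :
    ∃ C, FamCircuit 𝔅 C ∧ a ∈ C ∧ g ∈ C :=
  famCircuit_trans_aux haug ((C₁ ∪ C₂).card) C₁ C₂ a g le_rfl h₁ h₂ ha hg hint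

end CircLemmas
section MatroidFace

open Finset

variable {n r : ℕ}

open scoped Classical in
/-- The bases of the face: bases meeting `F` in a full-rank set. -/
noncomputable def faceBases (M : FinMatroid n r) (F : Finset (Fin n)) :
    Finset (Finset (Fin n)) :=
  M.bases.filter fun σ => (σ ∩ F).card = famRk M.bases F

variable {M : FinMatroid n r} {F : Finset (Fin n)}

lemma mem_faceBases_iff {B : Finset (Fin n)} :
    B ∈ faceBases M F ↔ B ∈ M.bases ∧ (B ∩ F).card = famRk M.bases F := by
  simp [faceBases]

lemma famAug_bases (M : FinMatroid n r) : FamAug M.bases :=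
  famAug_of_exchange M.card_bases M.exchange

lemma indep_card_le {I : Finset (Fin n)} (h : FamIndep M.bases I) : I.card ≤ r := by
  obtain ⟨B, hB, hIB⟩ := h
  have := card_le_card hIB
  rwa [M.card_bases B hB] at this

lemma mem_bases_of_indep_card {Z : Finset (Fin n)} (h : FamIndep M.bases Z)
    (hc : Z.card = r) : Z ∈ M.bases := by
  obtain ⟨B, hB, hZB⟩ := h
  have : Z = B := eq_of_subset_of_card_le hZB (by rw [M.card_bases B hB, hc])
  exact this ▸ hB

lemma card_le_famRk {I : Finset (Fin n)} (h : FamIndep M.bases I) (hIF : I ⊆ F) :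
    I.card ≤ famRk M.bases F := by
  classical
  exact Finset.le_sup (f := Finset.card)
    (Finset.mem_filter.mpr ⟨Finset.mem_powerset.mpr hIF, h⟩)

lemma exists_famRk_attained (M : FinMatroid n r) (F : Finset (Fin n)) :
    ∃ I, I ⊆ F ∧ FamIndep M.bases I ∧ I.card = famRk M.bases F := by
  classical
  have hne : (F.powerset.filter (fun I => FamIndep M.bases I)).Nonempty :=
    ⟨∅, Finset.mem_filter.mpr ⟨Finset.mem_powerset.mpr (Finset.empty_subset _),
      famIndep_empty M.bases_nonempty⟩⟩
  obtain ⟨I, hI, hmax⟩ := Finset.exists_max_image _ Finset.card hne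
  rw [Finset.mem_filter, Finset.mem_powerset] at hI
  refine ⟨I, hI.1, hI.2, le_antisymm (card_le_famRk hI.2 hI.1) ?_⟩
  classical
  apply Finset.sup_le
  intro J hJ
  exact hmax J hJ

lemma famRk_le_r (M : FinMatroid n r) (F : Finset (Fin n)) : famRk M.bases F ≤ r := by
  obtain ⟨I, _, hI, hc⟩ := exists_famRk_attained M F
  exact hc ▸ indep_card_le hI

lemma mem_famRestrictBases_iff {A : Finset (Fin n)} :
    A ∈ famRestrictBases M.bases F ↔ A ⊆ F ∧ FamIndep M.bases A ∧
      ∀ B' ⊆ F, FamIndep M.bases B' → A ⊆ B' → A = B' := by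
  simp [famRestrictBases, and_assoc]

lemma exists_restrictBasis_superset {I : Finset (Fin n)} (hI : FamIndep M.bases I)
    (hIF : I ⊆ F) : ∃ A ∈ famRestrictBases M.bases F, I ⊆ A := by
  obtain ⟨A, hIA, hAF, hAind, hAmax⟩ := exists_max_indep_between hI hIF
  refine ⟨A, mem_famRestrictBases_iff.mpr ⟨hAF, hAind, ?_⟩, hIA⟩
  intro B' hB'F hB'ind hAB'
  rcases eq_or_ssubset_of_subset hAB' with h | h
  · exact h
  · obtain ⟨x, hxB', hxA⟩ := exists_of_ssubset h
    exact absurd (famIndep_mono hB'ind (insert_subset hxB' hAB'))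
      (hAmax x (hB'F hxB') hxA)

lemma card_of_mem_restrictBases {A : Finset (Fin n)}
    (hA : A ∈ famRestrictBases M.bases F) : A.card = famRk M.bases F := by
  rw [mem_famRestrictBases_iff] at hA
  refine le_antisymm (card_le_famRk hA.2.1 hA.1) ?_
  obtain ⟨I, hIF, hIind, hIc⟩ := exists_famRk_attained M F
  by_contra h
  push_neg at h
  obtain ⟨x, hxI, hxA, hxind⟩ := famAug_bases M A I hA.2.1 hIind (by omega)
  have := hA.2.2 (insert x A) (insert_subset (hIF hxI) hA.1) hxind (subset_insert _ _)
  exact hxA (this ▸ mem_insert_self x A)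

lemma mem_restrictBases_of_card {A : Finset (Fin n)} (hind : FamIndep M.bases A)
    (hAF : A ⊆ F) (hc : A.card = famRk M.bases F) : A ∈ famRestrictBases M.bases F := by
  refine mem_famRestrictBases_iff.mpr ⟨hAF, hind, ?_⟩
  intro B' hB'F hB'ind hAB'
  exact eq_of_subset_of_card_le hAB' (by rw [hc]; exact card_le_famRk hB'ind hB'F)

lemma exists_faceBasis_through {A : Finset (Fin n)}
    (hA : A ∈ famRestrictBases M.bases F) :
    ∃ B ∈ faceBases M F, B ∩ F = A := by
  obtain ⟨hAF, ⟨B, hB, hAB⟩, _⟩ := mem_famRestrictBases_iff.mp hA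
  have hsub : A ⊆ B ∩ F := subset_inter hAB hAF
  have hcard : (B ∩ F).card ≤ famRk M.bases F :=
    card_le_famRk ⟨B, hB, inter_subset_left⟩ inter_subset_right
  have hAc := card_of_mem_restrictBases hA
  have heq : A = B ∩ F := eq_of_subset_of_card_le hsub (by omega)
  exact ⟨B, mem_faceBases_iff.mpr ⟨hB, by rw [← heq, hAc]⟩, heq.symm⟩

lemma faceBases_nonempty (M : FinMatroid n r) (F : Finset (Fin n)) :
    (faceBases M F).Nonempty := by
  obtain ⟨A, hA, _⟩ := exists_restrictBasis_superset
    (famIndep_empty M.bases_nonempty) (Finset.empty_subset F)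
  obtain ⟨B, hB, _⟩ := exists_faceBasis_through hA
  exact ⟨B, hB⟩

lemma faceBases_subset (M : FinMatroid n r) (F : Finset (Fin n)) :
    faceBases M F ⊆ M.bases := Finset.filter_subset _ _

lemma card_of_mem_faceBases {B : Finset (Fin n)} (hB : B ∈ faceBases M F) :
    B.card = r := M.card_bases B (faceBases_subset M F hB)

lemma faceIndep_indep {I : Finset (Fin n)} (h : FamIndep (faceBases M F) I) :
    FamIndep M.bases I := by
  obtain ⟨B, hB, hIB⟩ := h
  exact ⟨B, faceBases_subset M F hB, hIB⟩

lemma inter_mem_restrictBases {B : Finset (Fin n)} (hB : B ∈ faceBases M F) :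
    B ∩ F ∈ famRestrictBases M.bases F := by
  rw [mem_faceBases_iff] at hB
  exact mem_restrictBases_of_card ⟨B, hB.1, inter_subset_left⟩ inter_subset_right hB.2

/-- The direct-sum property of the face. -/
lemma union_mem_faceBases {A τ : Finset (Fin n)}
    (hA : A ∈ famRestrictBases M.bases F) (hτ : τ ∈ faceBases M F) :
    A ∪ (τ \ F) ∈ faceBases M F := by
  classical
  have hAF := (mem_famRestrictBases_iff.mp hA).1
  have hAind := (mem_famRestrictBases_iff.mp hA).2.1
  have hτb := faceBases_subset M F hτ
  have hτind : FamIndep M.bases τ := ⟨τ, hτb, subset_rfl⟩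
  obtain ⟨Z, hZind, hAZ, hZsub, hZc⟩ := famAug_maxaug (famAug_bases M) hAind hτind
  rw [M.card_bases τ hτb] at hZc
  have hZc' : Z.card = r := le_antisymm (indep_card_le hZind) hZc
  have hZb : Z ∈ M.bases := mem_bases_of_indep_card hZind hZc'
  have hAc := card_of_mem_restrictBases hA
  -- Z ∩ F = A
  have h1 : A ⊆ Z ∩ F := subset_inter hAZ hAF
  have h2 : (Z ∩ F).card ≤ famRk M.bases F :=
    card_le_famRk (famIndep_mono hZind inter_subset_left) inter_subset_right
  have hZF : A = Z ∩ F := eq_of_subset_of_card_le h1 (by omega)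
  -- Z \ F = τ \ F
  have h3 : Z \ F ⊆ τ \ F := by
    intro x hx
    rw [mem_sdiff] at hx ⊢
    rcases mem_union.mp (hZsub hx.1) with h | h
    · exact absurd (hAF h) hx.2
    · exact ⟨h, hx.2⟩
  have h4 : (Z \ F).card = r - famRk M.bases F := by
    have := card_inter_add_card_sdiff Z F
    rw [hZc', ← hZF, hAc] at this
    omega
  have h5 : (τ \ F).card = r - famRk M.bases F := by
    have := card_inter_add_card_sdiff τ F
    rw [M.card_bases τ hτb, (mem_faceBases_iff.mp hτ).2] at this
    omega
  have hZdiff : Z \ F = τ \ F := eq_of_subset_of_card_le h3 (by omega)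
  have hZeq : Z = A ∪ (τ \ F) := by
    rw [hZF, ← hZdiff]
    ext x
    simp only [mem_union, mem_inter, mem_sdiff]
    tauto
  rw [← hZeq]
  rw [mem_faceBases_iff, ← hZF]
  exact ⟨hZb, hAc⟩

lemma contractIndep_iff {I : Finset (Fin n)} :
    FamIndep (famContractBases M.bases F) I ↔ ∃ τ ∈ faceBases M F, I ⊆ τ \ F := by
  classical
  constructor
  · rintro ⟨B, hB, hIB⟩
    rw [famContractBases, Finset.mem_image] at hB
    obtain ⟨τ, hτ, rfl⟩ := hB
    exact ⟨τ, mem_faceBases_iff.mpr (by simpa using Finset.mem_filter.mp hτ), hIB⟩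
  · rintro ⟨τ, hτ, hIτ⟩
    refine ⟨τ \ F, ?_, hIτ⟩
    rw [famContractBases, Finset.mem_image]
    exact ⟨τ, Finset.mem_filter.mpr (by simpa using mem_faceBases_iff.mp hτ), rfl⟩

lemma contractIndep_inter {I : Finset (Fin n)}
    (h : FamIndep (famContractBases M.bases F) I) : I ∩ F = ∅ := by
  obtain ⟨τ, _, hIτ⟩ := contractIndep_iff.mp h
  ext x
  simp only [mem_inter, notMem_empty, iff_false, not_and]
  intro hx
  exact (mem_sdiff.mp (hIτ hx)).2

lemma contractIndep_iff_union {A₀ : Finset (Fin n)}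
    (hA₀ : A₀ ∈ famRestrictBases M.bases F) {I : Finset (Fin n)} :
    FamIndep (famContractBases M.bases F) I ↔
      I ∩ F = ∅ ∧ FamIndep M.bases (I ∪ A₀) := by
  constructor
  · intro h
    refine ⟨contractIndep_inter h, ?_⟩
    obtain ⟨τ, hτ, hIτ⟩ := contractIndep_iff.mp h
    have := union_mem_faceBases hA₀ hτ
    exact ⟨A₀ ∪ (τ \ F), faceBases_subset M F this,
      union_subset (hIτ.trans subset_union_right) subset_union_left⟩
  · rintro ⟨hIF, B, hB, hIB⟩
    have hA₀F := (mem_famRestrictBases_iff.mp hA₀).1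
    have hA₀sub : A₀ ⊆ B ∩ F := subset_inter (subset_union_right.trans hIB) hA₀F
    have hcard : (B ∩ F).card ≤ famRk M.bases F :=
      card_le_famRk ⟨B, hB, inter_subset_left⟩ inter_subset_right
    have hA₀c := card_of_mem_restrictBases hA₀
    have heq : A₀ = B ∩ F := eq_of_subset_of_card_le hA₀sub (by omega)
    rw [contractIndep_iff]
    refine ⟨B, mem_faceBases_iff.mpr ⟨hB, by rw [← heq, hA₀c]⟩, ?_⟩
    intro x hx
    rw [mem_sdiff]
    refine ⟨hIB (subset_union_left.trans (subset_refl _) hx), ?_⟩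
    intro hxF
    have : x ∈ I ∩ F := mem_inter.mpr ⟨hx, hxF⟩
    rw [hIF] at this
    exact notMem_empty x this

lemma faceIndep_iff {I : Finset (Fin n)} :
    FamIndep (faceBases M F) I ↔
      FamIndep M.bases (I ∩ F) ∧ FamIndep (famContractBases M.bases F) (I \ F) := by
  constructor
  · rintro ⟨B, hB, hIB⟩
    refine ⟨⟨B, faceBases_subset M F hB, inter_subset_left.trans hIB⟩, ?_⟩
    rw [contractIndep_iff]
    exact ⟨B, hB, sdiff_subset_sdiff hIB subset_rfl⟩
  · rintro ⟨h₁, h₂⟩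
    obtain ⟨A, hA, hIA⟩ := exists_restrictBasis_superset h₁ inter_subset_right
    obtain ⟨τ, hτ, hIτ⟩ := contractIndep_iff.mp h₂
    refine ⟨A ∪ (τ \ F), union_mem_faceBases hA hτ, ?_⟩
    intro x hx
    by_cases hxF : x ∈ F
    · exact mem_union_left _ (hIA (mem_inter.mpr ⟨hx, hxF⟩))
    · exact mem_union_right _ (hIτ (mem_sdiff.mpr ⟨hx, hxF⟩))

lemma restrictIndep_iff {I : Finset (Fin n)} :
    FamIndep (famRestrictBases M.bases F) I ↔ I ⊆ F ∧ FamIndep M.bases I := by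
  constructor
  · rintro ⟨A, hA, hIA⟩
    rw [mem_famRestrictBases_iff] at hA
    exact ⟨hIA.trans hA.1, famIndep_mono hA.2.1 hIA⟩
  · rintro ⟨hIF, hI⟩
    obtain ⟨A, hA, hIA⟩ := exists_restrictBasis_superset hI hIF
    exact ⟨A, hA, hIA⟩

lemma faceIndep_iff_of_subset {I : Finset (Fin n)} (hIF : I ⊆ F) :
    FamIndep (faceBases M F) I ↔ FamIndep M.bases I := by
  rw [faceIndep_iff]
  have h1 : I ∩ F = I := inter_eq_left.mpr hIF
  have h2 : I \ F = ∅ := sdiff_eq_empty_iff_subset.mpr hIF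
  rw [h1, h2]
  simp only [and_iff_left_iff_imp]
  intro _
  obtain ⟨τ, hτ⟩ := faceBases_nonempty M F
  exact contractIndep_iff.mpr ⟨τ, hτ, empty_subset _⟩

lemma faceIndep_iff_of_disjoint {I : Finset (Fin n)} (hIF : I ∩ F = ∅) :
    FamIndep (faceBases M F) I ↔ FamIndep (famContractBases M.bases F) I := by
  rw [faceIndep_iff, hIF]
  have h2 : I \ F = I := by
    ext x
    simp only [mem_sdiff, and_iff_left_iff_imp]
    intro hx hxF
    exact notMem_empty x (hIF ▸ mem_inter.mpr ⟨hx, hxF⟩)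
  rw [h2]
  simp [famIndep_empty M.bases_nonempty]

lemma famAug_restrict (M : FinMatroid n r) (F : Finset (Fin n)) :
    FamAug (famRestrictBases M.bases F) := by
  intro I J hI hJ hc
  rw [restrictIndep_iff] at hI hJ
  obtain ⟨x, hxJ, hxI, hxind⟩ := famAug_bases M I J hI.2 hJ.2 hc
  exact ⟨x, hxJ, hxI, restrictIndep_iff.mpr ⟨insert_subset (hJ.1 hxJ) hI.1, hxind⟩⟩

lemma famAug_contract (M : FinMatroid n r) (F : Finset (Fin n)) :
    FamAug (famContractBases M.bases F) := by
  classical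
  obtain ⟨A₀, hA₀, _⟩ := exists_restrictBasis_superset
    (famIndep_empty M.bases_nonempty) (Finset.empty_subset F)
  intro I J hI hJ hc
  rw [contractIndep_iff_union hA₀] at hI hJ
  have hdisjI : Disjoint I A₀ := by
    rw [Finset.disjoint_left]
    intro x hxI hxA₀
    have : x ∈ I ∩ F := mem_inter.mpr ⟨hxI, (mem_famRestrictBases_iff.mp hA₀).1 hxA₀⟩
    rw [hI.1] at this
    exact notMem_empty x this
  have hdisjJ : Disjoint J A₀ := by
    rw [Finset.disjoint_left]
    intro x hxJ hxA₀
    have : x ∈ J ∩ F := mem_inter.mpr ⟨hxJ, (mem_famRestrictBases_iff.mp hA₀).1 hxA₀⟩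
    rw [hJ.1] at this
    exact notMem_empty x this
  have hcard : (I ∪ A₀).card < (J ∪ A₀).card := by
    rw [card_union_of_disjoint hdisjI, card_union_of_disjoint hdisjJ]
    omega
  obtain ⟨x, hxJ, hxI, hxind⟩ := famAug_bases M _ _ hI.2 hJ.2 hcard
  rcases mem_union.mp hxJ with hxJ' | hxA₀
  · have hxI' : x ∉ I := fun h => hxI (mem_union_left _ h)
    have hxF : x ∉ F := by
      intro hxF
      have : x ∈ J ∩ F := mem_inter.mpr ⟨hxJ', hxF⟩
      rw [hJ.1] at this
      exact notMem_empty x this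
    refine ⟨x, hxJ', hxI', ?_⟩
    rw [contractIndep_iff_union hA₀]
    constructor
    · ext y
      simp only [mem_inter, mem_insert, notMem_empty, iff_false, not_and]
      rintro (rfl | hy)
      · exact fun h => hxF h
      · intro hyF
        exact notMem_empty y (hI.1 ▸ mem_inter.mpr ⟨hy, hyF⟩)
    · have : insert x I ∪ A₀ = insert x (I ∪ A₀) := by
        rw [Finset.insert_union]
      rw [this]
      exact hxind
  · exact absurd (mem_union_right _ hxA₀) hxI

lemma famAug_face (M : FinMatroid n r) (F : Finset (Fin n)) :
    FamAug (faceBases M F) := by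
  classical
  intro I J hI hJ hc
  rw [faceIndep_iff] at hI hJ
  have hIc := card_inter_add_card_sdiff I F
  have hJc := card_inter_add_card_sdiff J F
  by_cases h1 : (I ∩ F).card < (J ∩ F).card
  · obtain ⟨x, hxJ, hxI, hxind⟩ := famAug_bases M _ _ hI.1 hJ.1 h1
    have hxF : x ∈ F := (mem_inter.mp hxJ).2
    have hxI' : x ∉ I := fun h => hxI (mem_inter.mpr ⟨h, hxF⟩)
    refine ⟨x, (mem_inter.mp hxJ).1, hxI', ?_⟩
    rw [faceIndep_iff]
    constructor
    · have : insert x I ∩ F = insert x (I ∩ F) := by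
        ext y
        simp only [mem_inter, mem_insert]
        constructor
        · rintro ⟨rfl | hy, hyF⟩
          · exact Or.inl rfl
          · exact Or.inr ⟨hy, hyF⟩
        · rintro (rfl | ⟨hy, hyF⟩)
          · exact ⟨Or.inl rfl, hxF⟩
          · exact ⟨Or.inr hy, hyF⟩
      rw [this]; exact hxind
    · have : insert x I \ F = I \ F := by
        ext y; simp only [mem_sdiff, mem_insert]
        constructor
        · rintro ⟨rfl | hy, hyF⟩
          · exact absurd hxF hyF
          · exact ⟨hy, hyF⟩
        · rintro ⟨hy, hyF⟩; exact ⟨Or.inr hy, hyF⟩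
      rw [this]; exact hI.2
  · have h2 : (I \ F).card < (J \ F).card := by omega
    obtain ⟨x, hxJ, hxI, hxind⟩ := famAug_contract M F _ _ hI.2 hJ.2 h2
    have hxF : x ∉ F := (mem_sdiff.mp hxJ).2
    have hxI' : x ∉ I := fun h => hxI (mem_sdiff.mpr ⟨h, hxF⟩)
    refine ⟨x, (mem_sdiff.mp hxJ).1, hxI', ?_⟩
    rw [faceIndep_iff]
    constructor
    · have : insert x I ∩ F = I ∩ F := by
        ext y; simp only [mem_inter, mem_insert]
        constructor
        · rintro ⟨rfl | hy, hyF⟩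
          · exact absurd hyF hxF
          · exact ⟨hy, hyF⟩
        · rintro ⟨hy, hyF⟩; exact ⟨Or.inr hy, hyF⟩
      rw [this]; exact hI.1
    · have : insert x I \ F = insert x (I \ F) := by
        ext y; simp only [mem_sdiff, mem_insert]
        constructor
        · rintro ⟨rfl | hy, hyF⟩
          · exact Or.inl rfl
          · exact Or.inr ⟨hy, hyF⟩
        · rintro (rfl | ⟨hy, hyF⟩)
          · exact ⟨Or.inl rfl, hxF⟩
          · exact ⟨Or.inr hy, hyF⟩
      rw [this]; exact hxind

end MatroidFace
section MatroidFace2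

open Finset

variable {n r : ℕ} {M : FinMatroid n r} {F : Finset (Fin n)}

lemma restrictCircuit_iff_faceCircuit {C : Finset (Fin n)} (hCF : C ⊆ F) :
    FamCircuit (famRestrictBases M.bases F) C ↔ FamCircuit (faceBases M F) C := by
  have key : ∀ D ⊆ F, (FamIndep (famRestrictBases M.bases F) D ↔
      FamIndep (faceBases M F) D) := by
    intro D hDF
    rw [restrictIndep_iff, faceIndep_iff_of_subset hDF]
    simp [hDF]
  constructor
  · rintro ⟨h1, h2⟩
    exact ⟨fun h => h1 ((key C hCF).mpr h),
      fun D hD => (key D ((hD.subset).trans hCF)).mp (h2 D hD)⟩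
  · rintro ⟨h1, h2⟩
    exact ⟨fun h => h1 ((key C hCF).mp h),
      fun D hD => (key D ((hD.subset).trans hCF)).mpr (h2 D hD)⟩

lemma contractCircuit_iff_faceCircuit {C : Finset (Fin n)} (hCF : C ∩ F = ∅) :
    FamCircuit (famContractBases M.bases F) C ↔ FamCircuit (faceBases M F) C := by
  have key : ∀ D ⊆ C, (FamIndep (famContractBases M.bases F) D ↔
      FamIndep (faceBases M F) D) := by
    intro D hDC
    have hDF : D ∩ F = ∅ := by
      rw [← Finset.subset_empty, ← hCF]
      exact inter_subset_inter hDC subset_rfl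
    rw [faceIndep_iff_of_disjoint hDF]
  constructor
  · rintro ⟨h1, h2⟩
    exact ⟨fun h => h1 ((key C subset_rfl).mpr h),
      fun D hD => (key D hD.subset).mp (h2 D hD)⟩
  · rintro ⟨h1, h2⟩
    exact ⟨fun h => h1 ((key C subset_rfl).mp h),
      fun D hD => (key D hD.subset).mpr (h2 D hD)⟩

/-- Face circuits do not cross `F`. -/
lemma faceCircuit_not_cross {C : Finset (Fin n)}
    (hC : FamCircuit (faceBases M F) C) : C ⊆ F ∨ C ∩ F = ∅ := by
  by_contra hcon
  push_neg at hcon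
  obtain ⟨h1, h2⟩ := hcon
  have hx1 : ∃ x ∈ C, x ∉ F := by
    by_contra h; push_neg at h; exact h1 h
  have hx2 : (C ∩ F).Nonempty := h2
  obtain ⟨x, hxC, hxF⟩ := hx1
  obtain ⟨y, hy⟩ := hx2
  -- C ∩ F and C \ F are proper subsets of C
  have hss1 : C ∩ F ⊂ C := ssubset_iff_of_subset inter_subset_left |>.mpr
    ⟨x, hxC, fun h => hxF (mem_inter.mp h).2⟩
  have hss2 : C \ F ⊂ C := ssubset_iff_of_subset sdiff_subset |>.mpr
    ⟨y, (mem_inter.mp hy).1, fun h => (mem_sdiff.mp h).2 (mem_inter.mp hy).2⟩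
  have hind1 := hC.2 _ hss1
  have hind2 := hC.2 _ hss2
  rw [faceIndep_iff] at hind1 hind2
  apply hC.1
  rw [faceIndep_iff]
  refine ⟨?_, ?_⟩
  · rw [inter_assoc, inter_self] at hind1
    exact hind1.1
  · rw [Finset.sdiff_idem] at hind2
    exact hind2.2

lemma mem_faceBases_of_indep_card {Z : Finset (Fin n)}
    (h : FamIndep (faceBases M F) Z) (hc : Z.card = r) : Z ∈ faceBases M F := by
  obtain ⟨B, hB, hZB⟩ := h
  have : Z = B := eq_of_subset_of_card_le hZB
    (by rw [card_of_mem_faceBases hB, hc])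
  exact this ▸ hB

/-- From a face circuit through `i` and `j`, produce an exchange pair of face bases. -/
lemma faceCircuit_exchange_pair {C : Finset (Fin n)} {i j : Fin n}
    (hC : FamCircuit (faceBases M F) C) (hi : i ∈ C) (hj : j ∈ C) (hij : i ≠ j) :
    ∃ B ∈ faceBases M F, i ∉ B ∧ j ∈ B ∧ insert i (B.erase j) ∈ faceBases M F := by
  classical
  have hCi : FamIndep (faceBases M F) (C.erase i) :=
    hC.2 _ (erase_ssubset hi)
  obtain ⟨B, hB, hCB⟩ := hCi
  have hiB : i ∉ B := by
    intro hiB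
    apply hC.1
    refine ⟨B, hB, ?_⟩
    intro x hx
    by_cases hxi : x = i
    · exact hxi ▸ hiB
    · exact hCB (mem_erase.mpr ⟨hxi, hx⟩)
  have hjB : j ∈ B := hCB (mem_erase.mpr ⟨fun h => hij h.symm, hj⟩)
  set B' := insert i (B.erase j) with hB'
  have hiB'₀ : i ∉ B.erase j := fun h => hiB (mem_of_mem_erase h)
  have hB'card : B'.card = r := by
    rw [hB', card_insert_of_notMem hiB'₀, card_erase_of_mem hjB,
      card_of_mem_faceBases hB]
    have : 1 ≤ r := by
      rw [← card_of_mem_faceBases hB]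
      exact card_pos.mpr ⟨j, hjB⟩
    omega
  have hjB' : j ∉ B' := by
    rw [hB', mem_insert]
    push_neg
    exact ⟨fun h => hij h.symm, notMem_erase _ _⟩
  have hB'ind : FamIndep (faceBases M F) B' := by
    by_contra hdep
    obtain ⟨D, hDB', hD⟩ := exists_famCircuit_of_dep _ hdep
    have hiD : i ∈ D := by
      by_contra hiD
      apply hD.1
      refine ⟨B, hB, ?_⟩
      intro x hx
      rcases mem_insert.mp (hDB' hx) with rfl | hx'
      · exact absurd hx hiD
      · exact mem_of_mem_erase hx'
    have hjD : j ∉ D := fun h => hjB' (hDB' h)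
    have hDC : D ≠ C := fun h => hjD (h ▸ hj)
    have := famCircuit_weak_elim (famAug_face M F) hC hD (fun h => hDC h.symm) hi hiD
    apply this
    refine ⟨B, hB, ?_⟩
    intro x hx
    obtain ⟨hxi, hxU⟩ := mem_erase.mp hx
    rcases mem_union.mp hxU with hxC | hxD
    · exact hCB (mem_erase.mpr ⟨hxi, hxC⟩)
    · rcases mem_insert.mp (hDB' hxD) with rfl | hx'
      · exact absurd rfl hxi
      · exact mem_of_mem_erase hx'
  exact ⟨B, hB, hiB, hjB, mem_faceBases_of_indep_card hB'ind hB'card⟩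

/-- Separator constancy: if no face circuit crosses `K`, then `|B ∩ K|` is constant. -/
lemma faceBases_inter_card_const {K : Finset (Fin n)}
    (hK : ∀ C, FamCircuit (faceBases M F) C → C ⊆ K ∨ C ∩ K = ∅)
    {B B' : Finset (Fin n)} (hB : B ∈ faceBases M F) (hB' : B' ∈ faceBases M F) :
    (B ∩ K).card = (B' ∩ K).card := by
  classical
  have aux : ∀ B₁ ∈ faceBases M F, ∀ B₂ ∈ faceBases M F,
      (B₂ ∩ K).card ≤ (B₁ ∩ K).card := by
    intro B₁ hB₁ B₂ hB₂
    have hind : FamIndep (faceBases M F) ((B₂ ∩ K) ∪ (B₁ \ K)) := by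
      by_contra hdep
      obtain ⟨C, hCsub, hC⟩ := exists_famCircuit_of_dep _ hdep
      rcases hK C hC with h | h
      · apply hC.1
        refine ⟨B₂, hB₂, ?_⟩
        intro x hx
        rcases mem_union.mp (hCsub hx) with h' | h'
        · exact (mem_inter.mp h').1
        · exact absurd (h hx) (mem_sdiff.mp h').2
      · apply hC.1
        refine ⟨B₁, hB₁, ?_⟩
        intro x hx
        rcases mem_union.mp (hCsub hx) with h' | h'
        · exact absurd (mem_inter.mpr ⟨hx, (mem_inter.mp h').2⟩)
            (by rw [h]; exact notMem_empty x)
        · exact (mem_sdiff.mp h').1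
    obtain ⟨τ, hτ, hsubτ⟩ := hind
    have hdisj : Disjoint (B₂ ∩ K) (B₁ \ K) := by
      rw [Finset.disjoint_left]
      intro a ha hb
      exact (mem_sdiff.mp hb).2 (mem_inter.mp ha).2
    have hcard := card_le_card hsubτ
    rw [card_union_of_disjoint hdisj, card_of_mem_faceBases hτ] at hcard
    have := card_inter_add_card_sdiff B₁ K
    rw [card_of_mem_faceBases hB₁] at this
    omega
  exact le_antisymm (aux B' hB' B hB) (aux B hB B' hB')

end MatroidFace2
section LinAlg

open Finset

variable {n : ℕ}

lemma sum_indVec (B K : Finset (Fin n)) :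
    ∑ i ∈ K, indVec B i = ((B ∩ K).card : ℝ) := by
  classical
  unfold indVec
  rw [Finset.sum_boole]
  congr 2
  ext x
  simp only [mem_filter, mem_inter]
  tauto

lemma indVec_diff {B : Finset (Fin n)} {i j : Fin n} (hiB : i ∉ B) (hjB : j ∈ B) :
    indVec (insert i (B.erase j)) - indVec B
      = Pi.single i (1 : ℝ) - Pi.single j 1 := by
  classical
  have hij : i ≠ j := fun h => hiB (h ▸ hjB)
  funext k
  simp only [Pi.sub_apply, indVec, Pi.single_apply]
  by_cases hki : k = i
  · subst hki
    simp [mem_insert, hiB, hij]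
  · by_cases hkj : k = j
    · have h1 : k ∉ insert i (B.erase j) := by
        rw [mem_insert]
        push_neg
        refine ⟨hki, ?_⟩
        rw [hkj]
        exact notMem_erase _ _
      have h2 : k ∈ B := hkj ▸ hjB
      simp [h1, h2, hki, hkj, hjB]
    · have h1 : (k ∈ insert i (B.erase j)) ↔ k ∈ B := by
        rw [mem_insert, mem_erase]
        constructor
        · rintro (rfl | ⟨_, h⟩)
          · exact absurd rfl hki
          · exact h
        · intro h
          exact Or.inr ⟨hkj, h⟩
      by_cases hkB : k ∈ B <;> simp [h1, hkB, hki, hkj]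

/-- Upper bound on the dimension of a `vectorSpan` from linear relations on parts. -/
lemma finrank_vectorSpan_le_of_parts {c : ℕ} (s : Set (Fin n → ℝ))
    (parts : Fin c → Finset (Fin n)) (rep : Fin c → Fin n)
    (hrep : ∀ t, rep t ∈ parts t) (hdisj : ∀ t t', t ≠ t' → rep t ∉ parts t')
    (cs : Fin c → ℝ) (hsum : ∀ x ∈ s, ∀ t, ∑ i ∈ parts t, x i = cs t) :
    Module.finrank ℝ ↥(vectorSpan ℝ s) ≤ n - c := by
  classical
  set Φ : (Fin n → ℝ) →ₗ[ℝ] (Fin c → ℝ) :=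
    LinearMap.pi (fun t => ∑ i ∈ parts t, LinearMap.proj i) with hΦ
  have hΦapply : ∀ x t, Φ x t = ∑ i ∈ parts t, x i := by
    intro x t
    simp [hΦ, LinearMap.pi_apply, LinearMap.sum_apply, LinearMap.proj_apply]
  have hsurj : Function.Surjective Φ := by
    intro y
    refine ⟨fun i => ∑ t, if i = rep t then y t else 0, ?_⟩
    funext t
    rw [hΦapply, Finset.sum_comm]
    have hinner : ∀ t' : Fin c,
        (∑ i ∈ parts t, if i = rep t' then y t' else 0)
          = if t' = t then y t else 0 := by
      intro t'
      rw [Finset.sum_ite_eq' (parts t) (rep t') (fun _ => y t')]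
      by_cases h : t' = t
      · subst h; simp [hrep t']
      · simp [h, hdisj t' t h]
    rw [Finset.sum_congr rfl (fun t' _ => hinner t')]
    simp
  have hrange : LinearMap.range Φ = ⊤ := LinearMap.range_eq_top.mpr hsurj
  have hfr : Module.finrank ℝ ↥(LinearMap.ker Φ) = n - c := by
    have h := LinearMap.finrank_range_add_finrank_ker Φ
    rw [hrange, finrank_top] at h
    have h1 : Module.finrank ℝ (Fin c → ℝ) = c := by simp
    have h2 : Module.finrank ℝ (Fin n → ℝ) = n := by simp
    omega
  rw [← hfr]
  apply Submodule.finrank_mono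
  rw [vectorSpan_def, Submodule.span_le]
  rintro v hv
  obtain ⟨x, hx, y, hy, rfl⟩ := hv
  rw [SetLike.mem_coe, LinearMap.mem_ker]
  funext t
  have : Φ (x -ᵥ y) t = Φ x t - Φ y t := by
    have : (x -ᵥ y : Fin n → ℝ) = x - y := rfl
    rw [this, map_sub]
    rfl
  rw [this, hΦapply, hΦapply, hsum x hx t, hsum y hy t]
  simp

/-- Lower bound on the dimension of a `vectorSpan` from difference vectors. -/
lemma card_le_finrank_vectorSpan (s : Set (Fin n → ℝ)) (D : Finset (Fin n))
    (ref : Fin n → Fin n) (href : ∀ k ∈ D, ref k ∉ D)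
    (hmem : ∀ k ∈ D, (Pi.single k 1 - Pi.single (ref k) 1 : Fin n → ℝ)
      ∈ vectorSpan ℝ s) :
    D.card ≤ Module.finrank ℝ ↥(vectorSpan ℝ s) := by
  classical
  set v : ↥D → ↥(vectorSpan ℝ s) := fun k =>
    ⟨Pi.single k.1 1 - Pi.single (ref k.1) 1, hmem k.1 k.2⟩ with hv
  have hli : LinearIndependent ℝ v := by
    rw [linearIndependent_iff']
    intro t g hsum k hk
    have hamb : ∑ i ∈ t, g i •
        (Pi.single i.1 1 - Pi.single (ref i.1) 1 : Fin n → ℝ) = 0 := by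
      have h := congrArg (Submodule.subtype (vectorSpan ℝ s)) hsum
      simp only [map_sum, map_smul, map_zero] at h
      exact h
    have hcoord := congrFun hamb k.1
    rw [Finset.sum_apply] at hcoord
    have hterm : ∀ i ∈ t, (g i • (Pi.single i.1 1 - Pi.single (ref i.1) 1 :
        Fin n → ℝ)) k.1 = if i = k then g i else 0 := by
      intro i _
      have h1 : (Pi.single (ref i.1) (1:ℝ) : Fin n → ℝ) k.1 = 0 := by
        rw [Pi.single_apply]
        have : (k : Fin n) ≠ ref i.1 := fun h => (href i.1 i.2) (h ▸ k.2)
        simp [this]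
      have h2 : (Pi.single i.1 (1:ℝ) : Fin n → ℝ) k.1 = if i = k then 1 else 0 := by
        rw [Pi.single_apply]
        by_cases h : i = k
        · simp [h]
        · have : (k : Fin n) ≠ i.1 := fun hh => h (Subtype.ext hh.symm)
          simp [h, this]
      rw [Pi.smul_apply, Pi.sub_apply, h1, h2]
      by_cases h : i = k <;> simp [h]
    rw [Finset.sum_congr rfl hterm, Finset.sum_ite_eq' t k (fun i => g i)] at hcoord
    simp only [hk, if_true, Pi.zero_apply] at hcoord
    exact hcoord
  have hcard := hli.fintype_card_le_finrank
  simpa [Fintype.card_coe] using hcard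

end LinAlg
section Assembly

open Finset

variable {n r : ℕ} {M : FinMatroid n r} {F : Finset (Fin n)}

lemma single_diff_mem_vectorSpan {i j : Fin n} {C : Finset (Fin n)}
    (hC : FamCircuit (faceBases M F) C) (hiC : i ∈ C) (hjC : j ∈ C) (hij : i ≠ j) :
    (Pi.single i 1 - Pi.single j 1 : Fin n → ℝ)
      ∈ vectorSpan ℝ (indVec '' ↑(faceBases M F)) := by
  obtain ⟨B, hB, hiB, hjB, hB'⟩ := faceCircuit_exchange_pair hC hiC hjC hij
  have h1 : indVec (insert i (B.erase j)) ∈ indVec '' ↑(faceBases M F) :=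
    Set.mem_image_of_mem _ (by exact_mod_cast hB')
  have h2 : indVec B ∈ indVec '' ↑(faceBases M F) :=
    Set.mem_image_of_mem _ (by exact_mod_cast hB)
  have := vsub_mem_vectorSpan ℝ h1 h2
  rwa [vsub_eq_sub, indVec_diff hiB hjB] at this

lemma sum_const_on_face {K B₀ : Finset (Fin n)}
    (hsep : ∀ C, FamCircuit (faceBases M F) C → C ⊆ K ∨ C ∩ K = ∅)
    (hB₀ : B₀ ∈ faceBases M F) :
    ∀ x ∈ indVec '' ↑(faceBases M F), ∑ i ∈ K, x i = ((B₀ ∩ K).card : ℝ) := by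
  rintro x ⟨B, hB, rfl⟩
  rw [Finset.mem_coe] at hB
  rw [sum_indVec, faceBases_inter_card_const hsep hB hB₀]

lemma inter_compl_eq_sdiff (B : Finset (Fin n)) :
    B ∩ (Finset.univ \ F) = B \ F := by
  ext x; simp [mem_inter, mem_sdiff]

lemma faceBases_sdiff_card {B : Finset (Fin n)} (hB : B ∈ faceBases M F) :
    (B \ F).card = r - famRk M.bases F := by
  have h1 := card_inter_add_card_sdiff B F
  rw [card_of_mem_faceBases hB, (mem_faceBases_iff.mp hB).2] at h1
  omega

/-- Every face circuit within `Fᶜ` hits `F` trivially. -/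
lemma compl_sep : ∀ C, FamCircuit (faceBases M F) C →
    C ⊆ Finset.univ \ F ∨ C ∩ (Finset.univ \ F) = ∅ := by
  intro C hC
  rcases faceCircuit_not_cross hC with h | h
  · right
    ext x
    simp only [mem_inter, mem_sdiff, mem_univ, true_and, notMem_empty, iff_false, not_and]
    intro hxC
    simp [h hxC]
  · left
    intro x hx
    rw [mem_sdiff]
    refine ⟨mem_univ x, fun hxF => ?_⟩
    have : x ∈ C ∩ F := mem_inter.mpr ⟨hx, hxF⟩
    rw [h] at this
    exact notMem_empty x this

lemma F_sep : ∀ C, FamCircuit (faceBases M F) C → C ⊆ F ∨ C ∩ F = ∅ :=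
  fun C hC => faceCircuit_not_cross hC

end Assembly
section Assembly2

open Finset

variable {n r : ℕ} {M : FinMatroid n r} {F : Finset (Fin n)}

/-- Upper bound `n - 2` always holds for the face. -/
lemma face_dim_upper (hne : F ≠ ∅) (hpr : F ≠ Finset.univ) :
    Module.finrank ℝ ↥(vectorSpan ℝ (indVec '' ((faceBases M F : Finset (Finset (Fin n))) : Set (Finset (Fin n))))) ≤ n - 2 := by
  classical
  obtain ⟨i₀, hi₀⟩ := nonempty_iff_ne_empty.mpr hne
  obtain ⟨j₀, hj₀⟩ : ∃ x, x ∈ Finset.univ \ F := by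
    by_contra h
    push_neg at h
    refine hpr (Finset.eq_univ_iff_forall.mpr fun x => ?_)
    have := h x
    rw [mem_sdiff] at this
    push_neg at this
    exact this (mem_univ x)
  have hj₀F : j₀ ∉ F := (mem_sdiff.mp hj₀).2
  have h := finrank_vectorSpan_le_of_parts (indVec '' ((faceBases M F : Finset (Finset (Fin n))) : Set (Finset (Fin n))))
    ![F, Finset.univ \ F] ![i₀, j₀]
    (by
      intro t
      fin_cases t
      · exact hi₀
      · exact hj₀)
    (by
      intro t t' htt'
      fin_cases t <;> fin_cases t'
      · exact absurd rfl htt'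
      · exact fun h => (mem_sdiff.mp h).2 hi₀
      · exact hj₀F
      · exact absurd rfl htt')
    ![(famRk M.bases F : ℝ), ((r - famRk M.bases F : ℕ) : ℝ)]
    (by
      rintro x ⟨B, hB, rfl⟩ t
      rw [Finset.mem_coe] at hB
      fin_cases t
      · show ∑ i ∈ F, indVec B i = ((famRk M.bases F : ℕ) : ℝ)
        rw [sum_indVec, (mem_faceBases_iff.mp hB).2]
      · show ∑ i ∈ Finset.univ \ F, indVec B i = ((r - famRk M.bases F : ℕ) : ℝ)
        rw [sum_indVec, inter_compl_eq_sdiff, faceBases_sdiff_card hB])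
  simpa using h

/-- Lower bound `n - 2` when restriction and contraction are connected. -/
lemma face_dim_lower (hne : F ≠ ∅) (hpr : F ≠ Finset.univ)
    (hR : FamConnectedOn (famRestrictBases M.bases F) F)
    (hCc : FamConnectedOn (famContractBases M.bases F) (Finset.univ \ F)) :
    n - 2 ≤ Module.finrank ℝ ↥(vectorSpan ℝ (indVec '' ((faceBases M F : Finset (Finset (Fin n))) : Set (Finset (Fin n))))) := by
  classical
  obtain ⟨i₀, hi₀⟩ := nonempty_iff_ne_empty.mpr hne
  obtain ⟨j₀, hj₀⟩ : ∃ x, x ∈ Finset.univ \ F := by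
    by_contra h
    push_neg at h
    refine hpr (Finset.eq_univ_iff_forall.mpr fun x => ?_)
    have := h x
    rw [mem_sdiff] at this
    push_neg at this
    exact this (mem_univ x)
  have hj₀F : j₀ ∉ F := (mem_sdiff.mp hj₀).2
  set D := (F.erase i₀) ∪ ((Finset.univ \ F).erase j₀) with hD
  have hcard : D.card = n - 2 := by
    have hdisj : Disjoint (F.erase i₀) ((Finset.univ \ F).erase j₀) := by
      rw [Finset.disjoint_left]
      intro x hx hx'
      exact (mem_sdiff.mp (mem_of_mem_erase hx')).2 (mem_of_mem_erase hx)
    rw [hD, card_union_of_disjoint hdisj, card_erase_of_mem hi₀,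
      card_erase_of_mem hj₀, card_sdiff_of_subset (subset_univ F), card_univ, Fintype.card_fin]
    have h1 : 1 ≤ F.card := card_pos.mpr ⟨i₀, hi₀⟩
    have h2 : F.card < n := by
      have := card_lt_card (Finset.ssubset_iff_subset_ne.mpr ⟨subset_univ F, hpr⟩)
      rwa [card_univ, Fintype.card_fin] at this
    omega
  rw [← hcard]
  apply card_le_finrank_vectorSpan _ D (fun k => if k ∈ F then i₀ else j₀)
  · intro k hk
    rw [hD, mem_union] at hk
    by_cases hkF : k ∈ F
    · simp only [hkF, if_true]
      rw [hD, mem_union]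
      push_neg
      constructor
      · exact notMem_erase _ _
      · intro h
        exact (mem_sdiff.mp (mem_of_mem_erase h)).2 hi₀
    · simp only [hkF, if_false]
      rw [hD, mem_union]
      push_neg
      constructor
      · intro h
        exact hj₀F (mem_of_mem_erase h)
      · exact notMem_erase _ _
  · intro k hk
    rw [hD, mem_union] at hk
    rcases hk with hk | hk
    · have hkF : k ∈ F := mem_of_mem_erase hk
      have hki₀ : k ≠ i₀ := (mem_erase.mp hk).1
      simp only [hkF, if_true]
      obtain ⟨C, hCF, hCcirc, hkC, hi₀C⟩ := hR k hkF i₀ hi₀ hki₀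
      have hC' := (restrictCircuit_iff_faceCircuit hCF).mp hCcirc
      exact single_diff_mem_vectorSpan hC' hkC hi₀C hki₀
    · have hkFc : k ∈ Finset.univ \ F := mem_of_mem_erase hk
      have hkF : k ∉ F := (mem_sdiff.mp hkFc).2
      have hkj₀ : k ≠ j₀ := (mem_erase.mp hk).1
      simp only [hkF, if_false]
      obtain ⟨C, hCFc, hCcirc, hkC, hj₀C⟩ := hCc k hkFc j₀ hj₀ hkj₀
      have hCF : C ∩ F = ∅ := by
        ext x
        simp only [mem_inter, notMem_empty, iff_false, not_and]
        intro hx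
        exact (mem_sdiff.mp (hCFc hx)).2
      have hC' := (contractCircuit_iff_faceCircuit hCF).mp hCcirc
      exact single_diff_mem_vectorSpan hC' hkC hj₀C hkj₀

/-- A connectivity class is a separator for the face circuits. -/
lemma sep_of_class (E : Finset (Fin n))
    (hE : ∀ C, FamCircuit (faceBases M F) C → (C ∩ E).Nonempty → C ⊆ E) (i : Fin n)
    (K : Finset (Fin n))
    (hKmem : ∀ k, k ∈ K ↔ k ∈ E ∧ (k = i ∨
      ∃ C', FamCircuit (faceBases M F) C' ∧ i ∈ C' ∧ k ∈ C')) :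
    ∀ C, FamCircuit (faceBases M F) C → C ⊆ K ∨ C ∩ K = ∅ := by
  classical
  intro C hC
  by_cases hint : (C ∩ K).Nonempty
  · left
    obtain ⟨x, hx⟩ := hint
    rw [mem_inter] at hx
    obtain ⟨hxC, hxK⟩ := hx
    rw [hKmem] at hxK
    have hCE : C ⊆ E := hE C hC ⟨x, mem_inter.mpr ⟨hxC, hxK.1⟩⟩
    intro y hy
    rw [hKmem]
    refine ⟨hCE hy, ?_⟩
    rcases hxK.2 with rfl | ⟨C', hC', hiC', hxC'⟩
    · exact Or.inr ⟨C, hC, hxC, hy⟩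
    · obtain ⟨C'', hC'', hiC'', hyC''⟩ := famCircuit_trans (famAug_face M F) hC' hC
        hiC' hy ⟨x, mem_inter.mpr ⟨hxC', hxC⟩⟩
      exact Or.inr ⟨C'', hC'', hiC'', hyC''⟩
  · right
    exact not_nonempty_iff_eq_empty.mp hint

/-- Dimension bound `n - 3` from three separating parts with representatives. -/
lemma face_dim_le_three (P₁ P₂ P₃ : Finset (Fin n)) (p₁ p₂ p₃ : Fin n)
    (h₁ : p₁ ∈ P₁) (h₂ : p₂ ∈ P₂) (h₃ : p₃ ∈ P₃)
    (h12 : p₁ ∉ P₂) (h13 : p₁ ∉ P₃) (h21 : p₂ ∉ P₁) (h23 : p₂ ∉ P₃)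
    (h31 : p₃ ∉ P₁) (h32 : p₃ ∉ P₂)
    (hs₁ : ∀ C, FamCircuit (faceBases M F) C → C ⊆ P₁ ∨ C ∩ P₁ = ∅)
    (hs₂ : ∀ C, FamCircuit (faceBases M F) C → C ⊆ P₂ ∨ C ∩ P₂ = ∅)
    (hs₃ : ∀ C, FamCircuit (faceBases M F) C → C ⊆ P₃ ∨ C ∩ P₃ = ∅) :
    Module.finrank ℝ ↥(vectorSpan ℝ (indVec '' ((faceBases M F : Finset (Finset (Fin n))) : Set (Finset (Fin n))))) ≤ n - 3 := by
  classical
  obtain ⟨B₀, hB₀⟩ := faceBases_nonempty M F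
  have h := finrank_vectorSpan_le_of_parts (indVec '' ((faceBases M F : Finset (Finset (Fin n))) : Set (Finset (Fin n))))
    ![P₁, P₂, P₃] ![p₁, p₂, p₃]
    (by
      intro t
      fin_cases t
      exacts [h₁, h₂, h₃])
    (by
      intro t t' htt'
      fin_cases t <;> fin_cases t'
      exacts [absurd rfl htt', h12, h13, h21, absurd rfl htt', h23, h31, h32,
        absurd rfl htt'])
    ![((B₀ ∩ P₁).card : ℝ), ((B₀ ∩ P₂).card : ℝ), ((B₀ ∩ P₃).card : ℝ)]
    (by
      intro x hx t
      fin_cases t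
      · exact sum_const_on_face hs₁ hB₀ x hx
      · exact sum_const_on_face hs₂ hB₀ x hx
      · exact sum_const_on_face hs₃ hB₀ x hx)
  simpa using h

end Assembly2
theorem statement5 {n r : ℕ} (M : FinMatroid n r) (hn : 2 ≤ n)
    (hconn : M.numComponents = 1) (F : Finset (Fin n)) (hF : M.IsFlat F)
    (hne : F ≠ ∅) (hpr : F ≠ Finset.univ) :
    Module.finrank ℝ (affineSpan ℝ (convexHull ℝ
        (indVec '' {σ | σ ∈ M.bases ∧ (σ ∩ F).card = M.rk F}))).direction = n - 2 ↔
      (FamConnectedOn (M.restrictBases F) F ∧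
        FamConnectedOn (M.contractBases F) (Finset.univ \ F)) := by
  classical
  open Finset in
  have hset0 : {σ | σ ∈ M.bases ∧ (σ ∩ F).card = M.rk F}
      = ((faceBases M F : Finset (Finset (Fin n))) : Set (Finset (Fin n))) := by
    ext σ
    show (σ ∈ M.bases ∧ (σ ∩ F).card = M.rk F) ↔ σ ∈ faceBases M F
    rw [mem_faceBases_iff]
    rfl
  have hset : (indVec '' {σ | σ ∈ M.bases ∧ (σ ∩ F).card = M.rk F})
      = indVec '' ((faceBases M F : Finset (Finset (Fin n))) : Set (Finset (Fin n))) := by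
    rw [hset0]
  rw [hset, affineSpan_convexHull, direction_affineSpan]
  have hrestr : M.restrictBases F = famRestrictBases M.bases F := rfl
  have hcontr : M.contractBases F = famContractBases M.bases F := rfl
  rw [hrestr, hcontr]
  have hi₀ex : ∃ x, x ∈ F := by
    by_contra h
    push_neg at h
    exact hne (Finset.eq_empty_iff_forall_notMem.mpr h)
  obtain ⟨i₀, hi₀⟩ := hi₀ex
  have hj₀ex : ∃ x, x ∈ Finset.univ \ F := by
    by_contra h
    push_neg at h
    refine hpr (Finset.eq_univ_iff_forall.mpr fun x => ?_)
    have := h x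
    rw [Finset.mem_sdiff] at this
    push_neg at this
    exact this (Finset.mem_univ x)
  obtain ⟨j₀, hj₀⟩ := hj₀ex
  have hj₀F : j₀ ∉ F := (Finset.mem_sdiff.mp hj₀).2
  constructor
  · intro hdim
    constructor
    · -- restriction is connected
      intro i hiF j hjF hij
      by_contra hcon
      set K := F.filter (fun k => k = i ∨
        ∃ C', FamCircuit (faceBases M F) C' ∧ i ∈ C' ∧ k ∈ C') with hK
      have hKmem : ∀ k, k ∈ K ↔ k ∈ F ∧ (k = i ∨
          ∃ C', FamCircuit (faceBases M F) C' ∧ i ∈ C' ∧ k ∈ C') := by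
        intro k
        rw [hK, Finset.mem_filter]
      have hEprop : ∀ C, FamCircuit (faceBases M F) C → (C ∩ F).Nonempty → C ⊆ F := by
        intro C hC hne'
        rcases faceCircuit_not_cross hC with h | h
        · exact h
        · obtain ⟨x, hx⟩ := hne'
          rw [h] at hx
          exact absurd hx (Finset.notMem_empty x)
      have hsepK := sep_of_class F hEprop i K hKmem
      have hiK : i ∈ K := (hKmem i).mpr ⟨hiF, Or.inl rfl⟩
      have hjK : j ∉ K := by
        intro hjK'
        rcases ((hKmem j).mp hjK').2 with h | ⟨C, hC, hiC, hjC⟩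
        · exact hij h.symm
        · have hCF : C ⊆ F := hEprop C hC ⟨i, Finset.mem_inter.mpr ⟨hiC, hiF⟩⟩
          exact hcon ⟨C, hCF, (restrictCircuit_iff_faceCircuit hCF).mpr hC, hiC, hjC⟩
      have hsepFK : ∀ C, FamCircuit (faceBases M F) C →
          C ⊆ F \ K ∨ C ∩ (F \ K) = ∅ := by
        intro C hC
        rcases faceCircuit_not_cross hC with hCF | hCF
        · rcases hsepK C hC with h | h
          · right
            apply Finset.eq_empty_iff_forall_notMem.mpr
            intro x hx
            rw [Finset.mem_inter, Finset.mem_sdiff] at hx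
            exact hx.2.2 (h hx.1)
          · left
            intro x hx
            rw [Finset.mem_sdiff]
            refine ⟨hCF hx, fun hxK => ?_⟩
            have : x ∈ C ∩ K := Finset.mem_inter.mpr ⟨hx, hxK⟩
            rw [h] at this
            exact Finset.notMem_empty x this
        · right
          apply Finset.eq_empty_iff_forall_notMem.mpr
          intro x hx
          rw [Finset.mem_inter, Finset.mem_sdiff] at hx
          have : x ∈ C ∩ F := Finset.mem_inter.mpr ⟨hx.1, hx.2.1⟩
          rw [hCF] at this
          exact Finset.notMem_empty x this
      have hle := face_dim_le_three K (F \ K) (Finset.univ \ F) i j j₀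
        hiK (Finset.mem_sdiff.mpr ⟨hjF, hjK⟩) hj₀
        (fun h => (Finset.mem_sdiff.mp h).2 hiK)
        (fun h => (Finset.mem_sdiff.mp h).2 hiF)
        hjK
        (fun h => (Finset.mem_sdiff.mp h).2 hjF)
        (fun h => hj₀F ((hKmem j₀).mp h).1)
        (fun h => hj₀F (Finset.mem_sdiff.mp h).1)
        hsepK hsepFK compl_sep
      have h3 : 3 ≤ n := by
        have hij₀ : i ≠ j₀ := fun h => hj₀F (h ▸ hiF)
        have hjj₀ : j ≠ j₀ := fun h => hj₀F (h ▸ hjF)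
        have hc : ({i, j, j₀} : Finset (Fin n)).card = 3 := by
          rw [Finset.card_insert_of_notMem (by simp [hij, hij₀]),
            Finset.card_insert_of_notMem (by simp [hjj₀]), Finset.card_singleton]
        calc 3 = ({i, j, j₀} : Finset (Fin n)).card := hc.symm
          _ ≤ (Finset.univ : Finset (Fin n)).card := Finset.card_le_card (Finset.subset_univ _)
          _ = n := by rw [Finset.card_univ, Fintype.card_fin]
      omega
    · -- contraction is connected
      intro i hiFc j hjFc hij
      by_contra hcon
      have hiF : i ∉ F := (Finset.mem_sdiff.mp hiFc).2
      have hjF : j ∉ F := (Finset.mem_sdiff.mp hjFc).2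
      set K := (Finset.univ \ F).filter (fun k => k = i ∨
        ∃ C', FamCircuit (faceBases M F) C' ∧ i ∈ C' ∧ k ∈ C') with hK
      have hKmem : ∀ k, k ∈ K ↔ k ∈ Finset.univ \ F ∧ (k = i ∨
          ∃ C', FamCircuit (faceBases M F) C' ∧ i ∈ C' ∧ k ∈ C') := by
        intro k
        rw [hK, Finset.mem_filter]
      have hEprop : ∀ C, FamCircuit (faceBases M F) C →
          (C ∩ (Finset.univ \ F)).Nonempty → C ⊆ Finset.univ \ F := by
        intro C hC hne'
        rcases compl_sep C hC with h | h
        · exact h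
        · obtain ⟨x, hx⟩ := hne'
          rw [h] at hx
          exact absurd hx (Finset.notMem_empty x)
      have hsepK := sep_of_class (Finset.univ \ F) hEprop i K hKmem
      have hiK : i ∈ K := (hKmem i).mpr ⟨hiFc, Or.inl rfl⟩
      have hjK : j ∉ K := by
        intro hjK'
        rcases ((hKmem j).mp hjK').2 with h | ⟨C, hC, hiC, hjC⟩
        · exact hij h.symm
        · have hCFc : C ⊆ Finset.univ \ F :=
            hEprop C hC ⟨i, Finset.mem_inter.mpr ⟨hiC, hiFc⟩⟩
          have hCF : C ∩ F = ∅ := by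
            ext x
            simp only [Finset.mem_inter, Finset.notMem_empty, iff_false, not_and]
            intro hx
            exact (Finset.mem_sdiff.mp (hCFc hx)).2
          exact hcon ⟨C, hCFc, (contractCircuit_iff_faceCircuit hCF).mpr hC, hiC, hjC⟩
      have hsepP3 : ∀ C, FamCircuit (faceBases M F) C →
          C ⊆ (Finset.univ \ F) \ K ∨ C ∩ ((Finset.univ \ F) \ K) = ∅ := by
        intro C hC
        rcases compl_sep C hC with hCFc | hCFc
        · rcases hsepK C hC with h | h
          · right
            apply Finset.eq_empty_iff_forall_notMem.mpr
            intro x hx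
            rw [Finset.mem_inter, Finset.mem_sdiff] at hx
            exact hx.2.2 (h hx.1)
          · left
            intro x hx
            rw [Finset.mem_sdiff]
            refine ⟨hCFc hx, fun hxK => ?_⟩
            have : x ∈ C ∩ K := Finset.mem_inter.mpr ⟨hx, hxK⟩
            rw [h] at this
            exact Finset.notMem_empty x this
        · right
          apply Finset.eq_empty_iff_forall_notMem.mpr
          intro x hx
          rw [Finset.mem_inter, Finset.mem_sdiff] at hx
          have : x ∈ C ∩ (Finset.univ \ F) := Finset.mem_inter.mpr ⟨hx.1, hx.2.1⟩
          rw [hCFc] at this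
          exact Finset.notMem_empty x this
      have hi₀K : i₀ ∉ K := fun h =>
        (Finset.mem_sdiff.mp ((hKmem i₀).mp h).1).2 hi₀
      have hle := face_dim_le_three F K ((Finset.univ \ F) \ K) i₀ i j
        hi₀ hiK (Finset.mem_sdiff.mpr ⟨hjFc, hjK⟩)
        hi₀K
        (fun h => (Finset.mem_sdiff.mp (Finset.mem_sdiff.mp h).1).2 hi₀)
        hiF
        (fun h => (Finset.mem_sdiff.mp h).2 hiK)
        hjF
        hjK
        F_sep hsepK hsepP3
      have h3 : 3 ≤ n := by
        have hi₀i : i₀ ≠ i := fun h => hiF (h ▸ hi₀)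
        have hi₀j : i₀ ≠ j := fun h => hjF (h ▸ hi₀)
        have hc : ({i₀, i, j} : Finset (Fin n)).card = 3 := by
          rw [Finset.card_insert_of_notMem (by simp [hi₀i, hi₀j]),
            Finset.card_insert_of_notMem (by simp [hij]), Finset.card_singleton]
        calc 3 = ({i₀, i, j} : Finset (Fin n)).card := hc.symm
          _ ≤ (Finset.univ : Finset (Fin n)).card := Finset.card_le_card (Finset.subset_univ _)
          _ = n := by rw [Finset.card_univ, Fintype.card_fin]
      omega
  · rintro ⟨hR, hCc⟩
    exact le_antisymm (face_dim_upper hne hpr) (face_dim_lower hne hpr hR hCc)
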